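/- Let m ≥ 2 and let σ = Fin 2 ⊕ Unit ⊕ (Fin m × Fin m) be a variable type, writing x₁, x₂ for the two Fin 2 variables, t for the Unit variable, and y_{rs} for the matrix variables. In S = MvPolynomial σ ℂ, let I ⊆ S be the ideal generated by X x₁, X x₂, and all X y_{rs}, and set F := X x₁ · X x₂ − X t · det Y, where Y is the m×m matrix with entries X y_{rs}. Then F ∈ I² and F ∉ I³. -/

import Mathlib

open MvPolynomial

/-- The hypersurface `x₁x₂ = t·det(y_{rs})` has multiplicity exactly `2` along the blow-up
center `W = (x₁ = x₂ = 0, y_{rs} = 0 for all r,s)`: its equation lies in `I²` but not in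
`I³`, where `I` is the ideal generated by `x₁, x₂` and all the `y_{rs}`. -/
theorem mult_two_along_center
    (m : ℕ) (hm : 2 ≤ m)
    (I : Ideal (MvPolynomial (Fin 2 ⊕ Unit ⊕ (Fin m × Fin m)) ℂ))
    (hI : I = Ideal.span
      ({X (Sum.inl 0), X (Sum.inl 1)} ∪
        Set.range fun q : Fin m × Fin m =>
          (X (Sum.inr (Sum.inr q)) : MvPolynomial (Fin 2 ⊕ Unit ⊕ (Fin m × Fin m)) ℂ)))
    (F : MvPolynomial (Fin 2 ⊕ Unit ⊕ (Fin m × Fin m)) ℂ)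
    (hF : F = X (Sum.inl 0) * X (Sum.inl 1) -
      X (Sum.inr (Sum.inl ())) *
        (Matrix.of fun r s : Fin m =>
          (X (Sum.inr (Sum.inr (r, s))) :
            MvPolynomial (Fin 2 ⊕ Unit ⊕ (Fin m × Fin m)) ℂ)).det) :
    F ∈ I ^ 2 ∧ F ∉ I ^ 3 := by
  have hx1 : X (Sum.inl 0) ∈ I := by
    rw [hI]; exact Ideal.subset_span (Or.inl (Or.inl rfl))
  have hx2 : X (Sum.inl 1) ∈ I := by
    rw [hI]; exact Ideal.subset_span (Or.inl (Or.inr rfl))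
  have hy : ∀ q : Fin m × Fin m, X (Sum.inr (Sum.inr q)) ∈ I := fun q => by
    rw [hI]; exact Ideal.subset_span (Or.inr ⟨q, rfl⟩)
  constructor
  · -- F ∈ I ^ 2
    rw [hF, pow_two]
    refine sub_mem (Ideal.mul_mem_mul hx1 hx2) (Ideal.mul_mem_left _ _ ?_)
    rw [Matrix.det_apply']
    refine Submodule.sum_mem _ fun σ _ => Ideal.mul_mem_left _ _ ?_
    obtain ⟨k, rfl⟩ : ∃ k, m = k + 2 := ⟨m - 2, by omega⟩
    rw [Fin.prod_univ_succ, Fin.prod_univ_succ]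
    exact Ideal.mul_mem_mul (hy _) (Ideal.mul_mem_right _ _ (hy _))
  · -- F ∉ I ^ 3
    intro hmem
    -- evaluate: x₁, x₂ ↦ X, t ↦ 1, y ↦ 0
    set ev : MvPolynomial (Fin 2 ⊕ Unit ⊕ (Fin m × Fin m)) ℂ →ₐ[ℂ] Polynomial ℂ :=
      aeval (fun v => match v with
        | Sum.inl _ => Polynomial.X
        | Sum.inr (Sum.inl _) => 1
        | Sum.inr (Sum.inr _) => 0) with hev
    have hevF : ev F = Polynomial.X ^ 2 := by
      have : Nonempty (Fin m) := ⟨⟨0, by omega⟩⟩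
      rw [hF]
      simp only [map_sub, map_mul, hev, aeval_X]
      rw [show (ev (Matrix.of fun r s : Fin m =>
          (X (Sum.inr (Sum.inr (r, s))) :
            MvPolynomial (Fin 2 ⊕ Unit ⊕ (Fin m × Fin m)) ℂ)).det)
          = ((Matrix.of fun r s : Fin m =>
          (X (Sum.inr (Sum.inr (r, s))) :
            MvPolynomial (Fin 2 ⊕ Unit ⊕ (Fin m × Fin m)) ℂ)).map ev).det from
        RingHom.map_det ev.toRingHom _]
      have hzero : ((Matrix.of fun r s : Fin m =>
          (X (Sum.inr (Sum.inr (r, s))) :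
            MvPolynomial (Fin 2 ⊕ Unit ⊕ (Fin m × Fin m)) ℂ)).map ev) = 0 := by
        ext r s
        simp [hev, Matrix.map_apply]
      rw [hzero, Matrix.det_zero]
      ring
    have hmap : Ideal.map ev.toRingHom I ≤ Ideal.span {Polynomial.X} := by
      rw [hI, Ideal.map_span]
      rw [Ideal.span_le]
      rintro p ⟨q, hq, rfl⟩
      simp only [Set.mem_union, Set.mem_insert_iff, Set.mem_singleton_iff,
        Set.mem_range] at hq
      rcases hq with (rfl | rfl) | ⟨w, rfl⟩ <;>
      · show ev _ ∈ Ideal.span {Polynomial.X}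
        simp [hev, Ideal.mem_span_singleton]
    have h3 : ev F ∈ Ideal.span {Polynomial.X} ^ 3 := by
      have h1 : ev F ∈ Ideal.map ev.toRingHom (I ^ 3) :=
        Ideal.mem_map_of_mem _ hmem
      rw [Ideal.map_pow] at h1
      exact Ideal.pow_right_mono hmap 3 h1
    rw [hevF, Ideal.span_singleton_pow, Ideal.mem_span_singleton] at h3
    have := Polynomial.natDegree_le_of_dvd h3 (by
      exact pow_ne_zero 2 Polynomial.X_ne_zero)
    simp [Polynomial.natDegree_X_pow] at this
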